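/- arXiv:1306.6548 — 7 statements merged into one kernel-verified Lean document; each statement's English description precedes it below -/
import Mathlib

section
/- For every integer m ≥ 2, the polynomial F_m(x) = Σ_{j=0}^{m} V_{2j}(x) satisfies F_m(x) ≥ 0 for all real x. -/
open Real

noncomputable def chebV (m : ℕ) (x : ℝ) : ℝ := (Polynomial.Chebyshev.U ℝ m).eval (x / 2)

/-- `F_m(x) = ∑_{j=0}^m V_{2j}(x)`. -/
noncomputable def chebF (m : ℕ) (x : ℝ) : ℝ := ∑ j ∈ Finset.range (m + 1), chebV (2 * j) x

open Polynomial Polynomial.Chebyshev in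
lemma chebU_double (n : ℕ) :
    U ℝ (2 * (n : ℤ)) = U ℝ n ^ 2 - U ℝ ((n : ℤ) - 1) ^ 2 ∧
    U ℝ (2 * (n : ℤ) + 1) = U ℝ n * (U ℝ ((n : ℤ) + 1) - U ℝ ((n : ℤ) - 1)) := by
  induction n with
  | zero => simp [U_zero, U_one, U_neg_one]
  | succ n ih =>
    obtain ⟨hA, hB⟩ := ih
    have h2 : U ℝ (2 * (n : ℤ) + 2) = 2 * X * U ℝ (2 * (n : ℤ) + 1) - U ℝ (2 * (n : ℤ)) :=
      U_add_two ℝ (2 * (n : ℤ))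
    have h3 : U ℝ (2 * (n : ℤ) + 3) = 2 * X * U ℝ (2 * (n : ℤ) + 2) - U ℝ (2 * (n : ℤ) + 1) := by
      have h := U_add_two ℝ (2 * (n : ℤ) + 1)
      rw [show (2 * (n : ℤ) + 1 + 2) = 2 * (n : ℤ) + 3 from by ring,
        show (2 * (n : ℤ) + 1 + 1) = 2 * (n : ℤ) + 2 from by ring] at h
      exact h
    have hrec : U ℝ ((n : ℤ) + 1) = 2 * X * U ℝ (n : ℤ) - U ℝ ((n : ℤ) - 1) := U_add_one ℝ n
    have hrec2 : U ℝ ((n : ℤ) + 2) = 2 * X * U ℝ ((n : ℤ) + 1) - U ℝ (n : ℤ) :=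
      U_add_two ℝ (n : ℤ)
    have key1 : U ℝ (2 * (n : ℤ) + 2) = U ℝ ((n : ℤ) + 1) ^ 2 - U ℝ (n : ℤ) ^ 2 := by
      linear_combination h2 + 2 * X * hB - hA +
        (U ℝ ((n : ℤ) - 1) - U ℝ ((n : ℤ) + 1)) * hrec
    have key2 : U ℝ (2 * (n : ℤ) + 3) =
        U ℝ ((n : ℤ) + 1) * (U ℝ ((n : ℤ) + 2) - U ℝ (n : ℤ)) := by
      linear_combination h3 + 2 * X * key1 - hB - U ℝ ((n : ℤ) + 1) * hrec2 +
        U ℝ (n : ℤ) * hrec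
    constructor
    · push_cast
      rw [show (2 * ((n : ℤ) + 1)) = 2 * (n : ℤ) + 2 from by ring,
        show ((n : ℤ) + 1 - 1) = (n : ℤ) from by ring]
      exact key1
    · push_cast
      rw [show (2 * ((n : ℤ) + 1) + 1) = 2 * (n : ℤ) + 3 from by ring,
        show ((n : ℤ) + 1 + 1) = (n : ℤ) + 2 from by ring,
        show ((n : ℤ) + 1 - 1) = (n : ℤ) from by ring]
      exact key2

lemma chebF_eq_sq (m : ℕ) (x : ℝ) :
    chebF m x = ((Polynomial.Chebyshev.U ℝ m).eval (x / 2)) ^ 2 := by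
  induction m with
  | zero => simp [chebF, chebV, Polynomial.Chebyshev.U_zero]
  | succ m ih =>
    rw [chebF, Finset.sum_range_succ, ← chebF, ih, chebV]
    have hA := (chebU_double (m + 1)).1
    push_cast at hA ⊢
    rw [show ((2 : ℤ) * ((m : ℤ) + 1)) = 2 * ((m : ℤ) + 1) from rfl,
      show ((m : ℤ) + 1 - 1) = (m : ℤ) from by ring] at hA
    rw [hA]
    simp only [Polynomial.eval_sub, Polynomial.eval_pow]
    ring

/-- For `m ≥ 2`, `F_m(x) ≥ 0` for all real `x`. -/
theorem chebF_nonneg (m : ℕ) (hm : 2 ≤ m) (x : ℝ) : 0 ≤ chebF m x := by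
  rw [chebF_eq_sq]
  positivity
end

section
/- For m ≥ 2, let α_m = 2·cos(π/(m+1)). Then the rational function F̂_m(x) = F_m(x)/(x − α_m) extends to a polynomial that is nonpositive for x < α_m and strictly positive for x > α_m. -/
open Real

open Polynomial Polynomial.Chebyshev

lemma sin_sq_sub_sin_sq (A B : ℝ) :
    Real.sin A ^ 2 - Real.sin B ^ 2 = Real.sin (A+B) * Real.sin (A-B) := by
  have h1 := Real.cos_add (A+B) (A-B); have h2 := Real.cos_sub (A+B) (A-B)
  rw [show A+B+(A-B) = 2*A by ring] at h1
  rw [show A+B-(A-B) = 2*B by ring] at h2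
  have h3 := Real.sin_sq A; have h4 := Real.sin_sq B
  have h5 := Real.cos_sq A; have h6 := Real.cos_sq B
  linarith

lemma Usq (n : ℤ) :
    (U ℝ (n+1))^2 = (U ℝ n)^2 + U ℝ (2*n+2) := by
  apply Polynomial.eq_of_infinite_eval_eq
  refine Set.Infinite.mono ?_ (Set.Ioo_infinite (by norm_num : (-1:ℝ) < 1))
  intro y hy
  obtain ⟨hy1, hy2⟩ := hy
  set θ := Real.arccos y with hθ
  have hcos : Real.cos θ = y := Real.cos_arccos hy1.le hy2.le
  have hsin : 0 < Real.sin θ := by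
    rw [hθ, Real.sin_arccos]
    apply Real.sqrt_pos.mpr; nlinarith
  have h1 := Polynomial.Chebyshev.U_real_cos θ (n+1)
  have h2 := Polynomial.Chebyshev.U_real_cos θ n
  have h3 := Polynomial.Chebyshev.U_real_cos θ (2*n+2)
  rw [hcos] at h1 h2 h3
  push_cast at h1 h2 h3
  simp only [Set.mem_setOf_eq, Polynomial.eval_add, Polynomial.eval_pow]
  have key := sin_sq_sub_sin_sq (((n:ℝ)+2)*θ) (((n:ℝ)+1)*θ)
  rw [show ((n:ℝ)+2)*θ + ((n:ℝ)+1)*θ = (2*(n:ℝ)+3)*θ by ring,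
      show ((n:ℝ)+2)*θ - ((n:ℝ)+1)*θ = θ by ring] at key
  have h5 : (U ℝ (n+1)).eval y ^ 2 * Real.sin θ ^ 2
      = ((U ℝ n).eval y ^ 2 + (U ℝ (2*n+2)).eval y) * Real.sin θ ^ 2 := by
    have e1 : (U ℝ (n+1)).eval y ^ 2 * Real.sin θ ^ 2
        = ((U ℝ (n+1)).eval y * Real.sin θ) ^ 2 := by ring
    rw [e1, h1, show ((n:ℝ)+1+1) = (n:ℝ)+2 by ring]
    rw [show ((U ℝ n).eval y ^ 2 + (U ℝ (2*n+2)).eval y) * Real.sin θ ^ 2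
        = ((U ℝ n).eval y * Real.sin θ)^2 + ((U ℝ (2*n+2)).eval y * Real.sin θ) * Real.sin θ
        by ring, h2, h3, show (2*(n:ℝ)+2+1) = 2*(n:ℝ)+3 by ring]
    linarith
  exact mul_right_cancel₀ (pow_ne_zero 2 hsin.ne') h5

lemma sumU (m : ℕ) (y : ℝ) :
    ∑ j ∈ Finset.range (m+1), (U ℝ (2*(j:ℤ))).eval y = ((U ℝ (m:ℤ)).eval y)^2 := by
  induction m with
  | zero => simp [Polynomial.Chebyshev.U_zero]
  | succ n ih =>
    rw [Finset.sum_range_succ, ih]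
    have h := congrArg (Polynomial.eval y) (Usq n)
    simp only [Polynomial.eval_add, Polynomial.eval_pow] at h
    push_cast
    rw [show 2*((n:ℤ)+1) = 2*(n:ℤ)+2 by ring]
    linarith

lemma U_pos_of_one_le (n : ℕ) (y : ℝ) (hy : 1 ≤ y) :
    0 < (U ℝ (n:ℤ)).eval y ∧ (U ℝ (n:ℤ)).eval y ≤ (U ℝ ((n:ℤ)+1)).eval y := by
  induction n with
  | zero =>
    simp [Polynomial.Chebyshev.U_zero, Polynomial.Chebyshev.U_one]
    linarith
  | succ k ih =>
    obtain ⟨h1, h2⟩ := ih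
    have hrec := congrArg (Polynomial.eval y) (Polynomial.Chebyshev.U_add_two ℝ k)
    simp only [Polynomial.eval_sub, Polynomial.eval_mul, Polynomial.eval_ofNat,
      Polynomial.eval_X] at hrec
    push_cast at hrec ⊢
    constructor
    · linarith
    · rw [show (k:ℤ)+1+1 = (k:ℤ)+2 by ring, hrec]
      nlinarith

/-- For `m ≥ 2` and `α_m = 2 cos (π/(m+1))`, the rational function `F_m(x)/(x - α_m)`
extends to a polynomial which is nonpositive for `x < α_m` and positive for `x > α_m`. -/
theorem chebFhat_sign (m : ℕ) (hm : 2 ≤ m) :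
    ∃ p : Polynomial ℝ,
      (∀ x : ℝ, chebF m x = (x - 2 * Real.cos (π / (m + 1))) * p.eval x) ∧
      (∀ x : ℝ, x < 2 * Real.cos (π / (m + 1)) → p.eval x ≤ 0) ∧
      (∀ x : ℝ, 2 * Real.cos (π / (m + 1)) < x → 0 < p.eval x) := by
  set c : ℝ := Real.cos (π / (m + 1)) with hc
  have hm1 : (0:ℝ) < π / (m+1) := by positivity
  have hm2 : π / (m+1) < π := by
    have h2 : (2:ℝ) ≤ m := by exact_mod_cast hm
    rw [div_lt_iff₀ (by positivity)]
    nlinarith [Real.pi_pos]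
  set W : Polynomial ℝ := (U ℝ (m:ℤ)).comp (Polynomial.C (1/2 : ℝ) * Polynomial.X) with hW
  have hWeval : ∀ x : ℝ, W.eval x = (U ℝ (m:ℤ)).eval (x/2) := by
    intro x
    rw [hW, Polynomial.eval_comp]
    norm_num
    ring_nf
  have hsinpos : 0 < Real.sin (π/(m+1)) := Real.sin_pos_of_pos_of_lt_pi hm1 hm2
  have hroot : W.eval (2*c) = 0 := by
    rw [hWeval, show (2*c)/2 = c by ring, hc]
    have h := Polynomial.Chebyshev.U_real_cos (π/(m+1)) (m:ℤ)
    rw [show (((m:ℤ):ℝ)+1) = ((m:ℝ)+1) by push_cast; ring] at h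
    rw [show ((m:ℝ)+1) * (π/(m+1)) = π by field_simp, Real.sin_pi] at h
    exact (mul_eq_zero.mp h).resolve_right hsinpos.ne'
  obtain ⟨q, hq⟩ := Polynomial.dvd_iff_isRoot.mpr hroot
  have hUpos : ∀ y : ℝ, c < y → 0 < (U ℝ (m:ℤ)).eval y := by
    intro y hy
    rcases lt_or_ge y 1 with h1 | h1
    · have hcm : -1 < c := by
        rw [hc, show (-1:ℝ) = Real.cos π by simp]
        exact Real.cos_lt_cos_of_nonneg_of_le_pi hm1.le le_rfl hm2
      set θ := Real.arccos y with hθ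
      have hcos : Real.cos θ = y := Real.cos_arccos (by linarith) h1.le
      have hθpos : 0 < θ := Real.arccos_pos.mpr h1
      have hθlt : θ < π / (m+1) := by
        by_contra hcon
        push_neg at hcon
        have := Real.cos_le_cos_of_nonneg_of_le_pi hm1.le (Real.arccos_le_pi y) hcon
        rw [hcos] at this
        exact absurd this (not_le.mpr hy)
      have hsθ : 0 < Real.sin θ := Real.sin_pos_of_pos_of_lt_pi hθpos (lt_trans hθlt hm2)
      have hsm : 0 < Real.sin (((m:ℝ)+1) * θ) := by
        apply Real.sin_pos_of_pos_of_lt_pi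
        · positivity
        · have : ((m:ℝ)+1) * θ < ((m:ℝ)+1) * (π/(m+1)) := by
            apply mul_lt_mul_of_pos_left hθlt (by positivity)
          rw [show ((m:ℝ)+1) * (π/(m+1)) = π by field_simp] at this
          exact this
      have h := Polynomial.Chebyshev.U_real_cos θ (m:ℤ)
      rw [hcos, show (((m:ℤ):ℝ)+1) = ((m:ℝ)+1) by push_cast; ring] at h
      nlinarith
    · exact (U_pos_of_one_le m y h1).1
  refine ⟨(Polynomial.X - Polynomial.C (2*c)) * q^2, ?_, ?_, ?_⟩
  · intro x
    have hFV : chebF m x = ((U ℝ (m:ℤ)).eval (x/2))^2 := by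
      rw [chebF]
      have : ∀ j ∈ Finset.range (m+1), chebV (2*j) x = (U ℝ (2*(j:ℤ))).eval (x/2) := by
        intro j _
        rw [chebV]
        norm_num
      rw [Finset.sum_congr rfl this, sumU]
    rw [hFV, ← hWeval, hq]
    simp only [Polynomial.eval_mul, Polynomial.eval_pow, Polynomial.eval_sub,
      Polynomial.eval_X, Polynomial.eval_C]
    ring
  · intro x hx
    simp only [Polynomial.eval_mul, Polynomial.eval_pow, Polynomial.eval_sub,
      Polynomial.eval_X, Polynomial.eval_C]
    nlinarith [sq_nonneg (q.eval x)]
  · intro x hx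
    have hWx : 0 < W.eval x := by
      rw [hWeval]
      exact hUpos (x/2) (by linarith)
    rw [hq] at hWx
    simp only [Polynomial.eval_mul, Polynomial.eval_sub, Polynomial.eval_X,
      Polynomial.eval_C] at hWx
    simp only [Polynomial.eval_mul, Polynomial.eval_pow, Polynomial.eval_sub,
      Polynomial.eval_X, Polynomial.eval_C]
    have hqx : 0 < q.eval x := by nlinarith
    nlinarith
end

section
/- Let F(x) = Σ_{j=0}^{n} c_j V_j(x) with all c_j ≥ 0 and some c_j > 0 for j ≥ 1. Then for any s > 0, the shifted polynomial x ↦ F(x + s) equals Σ_{j=0}^{n} q_j(s) V_j(x) with all q_j(s) ≥ 0 and q_0(s) > 0. -/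
open Real

lemma chebV_zero (x : ℝ) : chebV 0 x = 1 := by simp [chebV]

lemma chebV_one (x : ℝ) : chebV 1 x = x := by
  simp [chebV, Polynomial.Chebyshev.U_one]; ring

lemma chebV_add_two (m : ℕ) (x : ℝ) :
    chebV (m + 2) x = x * chebV (m + 1) x - chebV m x := by
  unfold chebV
  push_cast
  rw [Polynomial.Chebyshev.U_add_two]
  simp only [Polynomial.eval_sub, Polynomial.eval_mul, Polynomial.eval_ofNat, Polynomial.eval_X]
  ring

lemma chebV_mul_aux (x : ℝ) : ∀ b a : ℕ,
    chebV (a + 1) x * chebV (b + 1) x = chebV (a + b + 2) x + chebV a x * chebV b x := by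
  intro b
  induction b with
  | zero =>
    intro a
    rw [chebV_one, chebV_zero, show a + 0 + 2 = a + 2 by omega, chebV_add_two]
    ring
  | succ b ih =>
    intro a
    match a with
    | 0 =>
      rw [chebV_one, chebV_zero, show 0 + (b + 1) + 2 = b + 1 + 2 by omega,
        chebV_add_two (b + 1)]
      ring
    | a + 1 =>
      rw [show a + 1 + 1 = a + 2 by omega, show b + 1 + 1 = b + 2 by omega,
        show a + 1 + (b + 1) + 2 = a + b + 4 by omega]
      have hb := chebV_add_two b x
      have ha := chebV_add_two a x
      have h2 : chebV (a + 2) x * chebV (b + 1) x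
          = chebV (a + b + 3) x + chebV (a + 1) x * chebV b x := by
        have := ih (a + 1)
        rwa [show a + 1 + 1 = a + 2 by omega, show a + 1 + b + 2 = a + b + 3 by omega] at this
      have h3 := ih a
      have hs : chebV (a + b + 4) x = x * chebV (a + b + 3) x - chebV (a + b + 2) x := by
        have := chebV_add_two (a + b + 2) x
        rwa [show a + b + 2 + 2 = a + b + 4 by omega, show a + b + 2 + 1 = a + b + 3 by omega]
          at this
      linear_combination (chebV (a + 2) x) * hb + x * h2 - (chebV b x) * ha - hs - h3

lemma chebV_mul (x : ℝ) : ∀ a d : ℕ,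
    chebV a x * chebV (a + d) x = ∑ u ∈ Finset.range (a + 1), chebV (d + 2 * u) x := by
  intro a
  induction a with
  | zero => intro d; simp [chebV_zero]
  | succ a ih =>
    intro d
    rw [Finset.sum_range_succ, ← ih d]
    have h := chebV_mul_aux x (a + d) a
    rw [show a + (a + d) + 2 = d + 2 * (a + 1) by omega] at h
    rw [show a + 1 + d = a + d + 1 by omega, h]
    ring

/-- nonneg combination of `V_0, ..., V_r` -/
def NN (r : ℕ) (f : ℝ → ℝ) : Prop :=
  ∃ e : ℕ → ℝ, (∀ k, 0 ≤ e k) ∧ ∀ x, f x = ∑ k ∈ Finset.range (r + 1), e k * chebV k x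

lemma NN_chebV {k r : ℕ} (h : k ≤ r) : NN r (chebV k) := by
  refine ⟨fun k' => if k' = k then 1 else 0, fun k' => by positivity, fun x => ?_⟩
  have : ∀ k' ∈ Finset.range (r + 1),
      (if k' = k then (1:ℝ) else 0) * chebV k' x = if k' = k then chebV k x else 0 := by
    intro k' _
    by_cases hk : k' = k <;> simp [hk]
  rw [Finset.sum_congr rfl this, Finset.sum_ite_eq' (Finset.range (r + 1)) k
    (fun _ => chebV k x)]
  simp [Finset.mem_range, Nat.lt_succ_iff, h]

lemma NN_add {r : ℕ} {f g : ℝ → ℝ} (hf : NN r f) (hg : NN r g) :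
    NN r (fun x => f x + g x) := by
  obtain ⟨e, he, hfe⟩ := hf
  obtain ⟨e', he', hge⟩ := hg
  exact ⟨fun k => e k + e' k, fun k => add_nonneg (he k) (he' k), fun x => by
    simp only [hfe x, hge x, ← Finset.sum_add_distrib]; congr 1; ext k; ring⟩

lemma NN_smul {r : ℕ} {t : ℝ} (ht : 0 ≤ t) {f : ℝ → ℝ} (hf : NN r f) :
    NN r (fun x => t * f x) := by
  obtain ⟨e, he, hfe⟩ := hf
  exact ⟨fun k => t * e k, fun k => mul_nonneg ht (he k), fun x => by
    simp only [hfe x, Finset.mul_sum]; congr 1; ext k; ring⟩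

lemma NN_mono {r r' : ℕ} (h : r ≤ r') {f : ℝ → ℝ} (hf : NN r f) : NN r' f := by
  obtain ⟨e, he, hfe⟩ := hf
  refine ⟨fun k => if k ≤ r then e k else 0, fun k => by
    by_cases hk : k ≤ r <;> simp [hk, he k], fun x => ?_⟩
  have hsub : Finset.range (r + 1) ⊆ Finset.range (r' + 1) :=
    Finset.range_subset_range.2 (by omega)
  rw [← Finset.sum_subset hsub (fun k _ hk => ?_)]
  · rw [hfe x]
    apply Finset.sum_congr rfl
    intro k hk
    simp only [Finset.mem_range, Nat.lt_succ_iff] at hk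
    simp [hk]
  · simp only [Finset.mem_range, Nat.lt_succ_iff] at hk
    simp [hk]

lemma NN_sum {r : ℕ} {ι : Type*} (T : Finset ι) (f : ι → ℝ → ℝ)
    (hf : ∀ i ∈ T, NN r (f i)) : NN r (fun x => ∑ i ∈ T, f i x) := by
  classical
  induction T using Finset.induction_on with
  | empty =>
    refine ⟨fun _ => 0, fun _ => le_refl 0, fun x => by simp⟩
  | @insert a T' hnotmem ih =>
    simp only [Finset.sum_insert hnotmem]
    exact NN_add (hf a (Finset.mem_insert_self a T'))
      (ih fun i hi => hf i (Finset.mem_insert_of_mem hi))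

lemma NN_mul_single (a k r : ℕ) (h : k ≤ r) :
    NN (a + r) (fun x => chebV a x * chebV k x) := by
  rcases le_total a k with hak | hka
  · have key : ∀ x, chebV a x * chebV k x
        = ∑ u ∈ Finset.range (a + 1), chebV (k - a + 2 * u) x := by
      intro x
      have := chebV_mul x a (k - a)
      rwa [show a + (k - a) = k by omega] at this
    have : NN (a + r) (fun x => ∑ u ∈ Finset.range (a + 1), chebV (k - a + 2 * u) x) :=
      NN_sum _ _ (fun u hu => by
        simp only [Finset.mem_range, Nat.lt_succ_iff] at hu
        exact NN_chebV (by omega))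
    obtain ⟨e, he, hfe⟩ := this
    exact ⟨e, he, fun x => by simp only []; rw [key x, ← hfe x]⟩
  · have key : ∀ x, chebV a x * chebV k x
        = ∑ u ∈ Finset.range (k + 1), chebV (a - k + 2 * u) x := by
      intro x
      have := chebV_mul x k (a - k)
      rw [show k + (a - k) = a by omega] at this
      rw [mul_comm, this]
    have : NN (a + r) (fun x => ∑ u ∈ Finset.range (k + 1), chebV (a - k + 2 * u) x) :=
      NN_sum _ _ (fun u hu => by
        simp only [Finset.mem_range, Nat.lt_succ_iff] at hu
        exact NN_chebV (by omega))
    obtain ⟨e, he, hfe⟩ := this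
    exact ⟨e, he, fun x => by simp only []; rw [key x, ← hfe x]⟩

lemma NN_chebV_mul {a r : ℕ} {f : ℝ → ℝ} (hf : NN r f) :
    NN (a + r) (fun x => chebV a x * f x) := by
  obtain ⟨e, he, hfe⟩ := hf
  have : NN (a + r) (fun x => ∑ k ∈ Finset.range (r + 1), e k * (chebV a x * chebV k x)) := by
    apply NN_sum
    intro k hk
    simp only [Finset.mem_range, Nat.lt_succ_iff] at hk
    exact NN_smul (he k) (NN_mul_single a k r hk)
  obtain ⟨e', he', hfe'⟩ := this
  refine ⟨e', he', fun x => ?_⟩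
  simp only [] at hfe' ⊢
  rw [← hfe' x, hfe x, Finset.mul_sum]
  apply Finset.sum_congr rfl
  intro k _; ring

noncomputable def P : ℕ → ℕ → ℝ → ℝ
  | 0, r => chebV r
  | (m+1), r => fun x => ∑ a ∈ Finset.range (r + 1), chebV a x * P m (r - a) x

lemma P_zero : ∀ m x, P m 0 x = 1 := by
  intro m
  induction m with
  | zero => intro x; exact chebV_zero x
  | succ m ih =>
    intro x
    show ∑ a ∈ Finset.range 1, chebV a x * P m (0 - a) x = 1
    rw [Finset.sum_range_one, chebV_zero, ih x]
    ring

lemma P_one : ∀ m x, P (m + 1) 1 x = P m 1 x + x := by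
  intro m x
  show ∑ a ∈ Finset.range 2, chebV a x * P m (1 - a) x = P m 1 x + x
  rw [Finset.sum_range_succ, Finset.sum_range_one, chebV_zero, chebV_one, P_zero]
  norm_num

lemma P_rel (m r : ℕ) (x : ℝ) :
    x * P (m + 1) (r + 1) x =
      P (m + 1) (r + 2) x - P m (r + 2) x + P (m + 1) r x := by
  have e1 : x * P (m + 1) (r + 1) x
      = ∑ a ∈ Finset.range (r + 2), (x * chebV a x) * P m (r + 1 - a) x := by
    show x * ∑ a ∈ Finset.range (r + 2), chebV a x * P m (r + 1 - a) x = _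
    rw [Finset.mul_sum]
    exact Finset.sum_congr rfl fun a _ => by ring
  rw [e1, Finset.sum_range_succ']
  -- now: ∑ b ∈ range (r+1), (x * chebV (b+1) x) * P m (r+1-(b+1)) x + (x * chebV 0 x) * P m (r+1) x
  have e2 : ∀ b ∈ Finset.range (r + 1),
      (x * chebV (b + 1) x) * P m (r + 1 - (b + 1)) x
        = chebV (b + 2) x * P m (r - b) x + chebV b x * P m (r - b) x := by
    intro b _
    have h : x * chebV (b + 1) x = chebV (b + 2) x + chebV b x := by
      rw [chebV_add_two]; ring
    rw [show r + 1 - (b + 1) = r - b by omega, h]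
    ring
  rw [Finset.sum_congr rfl e2, Finset.sum_add_distrib, chebV_zero]
  have e3 : ∑ b ∈ Finset.range (r + 1), chebV b x * P m (r - b) x = P (m + 1) r x := rfl
  have e4 : P (m + 1) (r + 2) x
      = ∑ b ∈ Finset.range (r + 1), chebV (b + 2) x * P m (r - b) x
        + chebV 1 x * P m (r + 1) x + chebV 0 x * P m (r + 2) x := by
    show ∑ a ∈ Finset.range (r + 3), chebV a x * P m (r + 2 - a) x = _
    rw [Finset.sum_range_succ', Finset.sum_range_succ']
    have : ∀ b ∈ Finset.range (r + 1),
        chebV (b + 1 + 1) x * P m (r + 2 - (b + 1 + 1)) x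
          = chebV (b + 2) x * P m (r - b) x := by
      intro b _
      rw [show r + 2 - (b + 1 + 1) = r - b by omega]
    rw [Finset.sum_congr rfl this, show r + 2 - (0 + 1) = r + 1 by omega,
      show r + 2 - 0 = r + 2 by omega]
  rw [chebV_one] at e4
  rw [chebV_zero] at e4
  rw [e3]
  simp only [Nat.sub_zero, one_mul, mul_one] at *
  linarith [e4]

lemma shift_id (s : ℝ) : ∀ j, ∀ x : ℝ,
    chebV j (x + s) = ∑ m ∈ Finset.range (j + 1), s ^ m * P m (j - m) x := by
  intro j
  induction j using Nat.twoStepInduction with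
  | zero =>
    intro x
    simp [chebV_zero, P]
  | one =>
    intro x
    rw [Finset.sum_range_succ, Finset.sum_range_one, chebV_one]
    show x + s = s ^ 0 * P 0 1 x + s ^ 1 * P 1 0 x
    rw [P_zero]
    show x + s = s ^ 0 * chebV 1 x + s ^ 1 * 1
    rw [chebV_one]; ring
  | more j ih2 ih1 =>
    intro x
    rw [chebV_add_two j (x + s), ih1 x, ih2 x]
    set A1 := ∑ m ∈ Finset.range j, s ^ (m + 1) * (x * P (m + 1) (j - m) x) with hA1
    set A2 := ∑ m ∈ Finset.range j, s ^ (m + 1) * P m (j + 1 - m) x with hA2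
    set A3 := ∑ m ∈ Finset.range j, s ^ (m + 1) * P (m + 1) (j - m - 1) x with hA3
    -- Left side chain
    have H1 : ∑ m ∈ Finset.range (j + 2 + 1), s ^ m * P m (j + 2 - m) x
        = ∑ m ∈ Finset.range (j + 2), s ^ (m + 1) * P (m + 1) (j + 1 - m) x
          + chebV (j + 2) x := by
      rw [Finset.sum_range_succ']
      congr 1
      · exact Finset.sum_congr rfl fun m _ => by
          rw [show j + 2 - (m + 1) = j + 1 - m by omega]
      · show s ^ 0 * P 0 (j + 2 - 0) x = chebV (j + 2) x
        show s ^ 0 * chebV (j + 2 - 0) x = chebV (j + 2) x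
        norm_num
    have H2 : ∑ m ∈ Finset.range (j + 2), s ^ (m + 1) * P (m + 1) (j + 1 - m) x
        = ∑ m ∈ Finset.range (j + 1), s ^ (m + 1) * P (m + 1) (j + 1 - m) x
          + s ^ (j + 2) := by
      rw [Finset.sum_range_succ (fun m => s ^ (m + 1) * P (m + 1) (j + 1 - m) x) (j + 1)]
      rw [show j + 1 - (j + 1) = 0 by omega, P_zero]
      ring
    have H3 : ∑ m ∈ Finset.range (j + 1), s ^ (m + 1) * P (m + 1) (j + 1 - m) x
        = (∑ m ∈ Finset.range j, s ^ (m + 1) * P (m + 1) (j + 1 - m) x)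
          + s ^ (j + 1) * (P j 1 x + x) := by
      rw [Finset.sum_range_succ (fun m => s ^ (m + 1) * P (m + 1) (j + 1 - m) x) j]
      rw [show j + 1 - j = 1 by omega, P_one]
    have H4 : ∑ m ∈ Finset.range j, s ^ (m + 1) * P (m + 1) (j + 1 - m) x
        = A1 + A2 - A3 := by
      rw [hA1, hA2, hA3, ← Finset.sum_add_distrib, ← Finset.sum_sub_distrib]
      apply Finset.sum_congr rfl
      intro m hm
      simp only [Finset.mem_range] at hm
      have hr := P_rel m (j - m - 1) x
      rw [show j - m - 1 + 1 = j - m by omega, show j - m - 1 + 2 = j + 1 - m by omega] at hr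
      rw [show j - m - 1 = j - m - 1 by rfl] at hr
      have : P (m + 1) (j + 1 - m) x
          = x * P (m + 1) (j - m) x + P m (j + 1 - m) x - P (m + 1) (j - m - 1) x := by
        linarith [hr]
      rw [this]
      ring
    -- Right side chain
    have B1 : ∑ m ∈ Finset.range (j + 1 + 1), s ^ m * (x * P m (j + 1 - m) x)
        = A1 + s ^ (j + 1) * x + x * chebV (j + 1) x := by
      rw [Finset.sum_range_succ (fun m => s ^ m * (x * P m (j + 1 - m) x)) (j + 1)]
      rw [show j + 1 - (j + 1) = 0 by omega, P_zero]
      rw [Finset.sum_range_succ' (fun m => s ^ m * (x * P m (j + 1 - m) x)) j]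
      have : ∀ m ∈ Finset.range j,
          s ^ (m + 1) * (x * P (m + 1) (j + 1 - (m + 1)) x)
            = s ^ (m + 1) * (x * P (m + 1) (j - m) x) := by
        intro m _
        rw [show j + 1 - (m + 1) = j - m by omega]
      rw [Finset.sum_congr rfl this]
      show A1 + s ^ 0 * (x * P 0 (j + 1 - 0) x) + s ^ (j + 1) * (x * 1)
          = A1 + s ^ (j + 1) * x + x * chebV (j + 1) x
      show A1 + s ^ 0 * (x * chebV (j + 1 - 0) x) + s ^ (j + 1) * (x * 1)
          = A1 + s ^ (j + 1) * x + x * chebV (j + 1) x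
      norm_num
      ring
    have B2 : ∑ m ∈ Finset.range (j + 1 + 1), s ^ (m + 1) * P m (j + 1 - m) x
        = A2 + s ^ (j + 1) * P j 1 x + s ^ (j + 2) := by
      rw [Finset.sum_range_succ (fun m => s ^ (m + 1) * P m (j + 1 - m) x) (j + 1)]
      rw [show j + 1 - (j + 1) = 0 by omega, P_zero]
      rw [Finset.sum_range_succ (fun m => s ^ (m + 1) * P m (j + 1 - m) x) j]
      rw [show j + 1 - j = 1 by omega]
      ring
    have B0 : ∑ m ∈ Finset.range (j + 1), s ^ m * P m (j - m) x
        = A3 + chebV j x := by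
      rw [Finset.sum_range_succ' (fun m => s ^ m * P m (j - m) x) j]
      have : ∀ m ∈ Finset.range j,
          s ^ (m + 1) * P (m + 1) (j - (m + 1)) x
            = s ^ (m + 1) * P (m + 1) (j - m - 1) x := by
        intro m _
        rw [show j - (m + 1) = j - m - 1 by omega]
      rw [Finset.sum_congr rfl this]
      show A3 + s ^ 0 * P 0 (j - 0) x = A3 + chebV j x
      show A3 + s ^ 0 * chebV (j - 0) x = A3 + chebV j x
      norm_num
    have Bsplit : (x + s) * (∑ m ∈ Finset.range (j + 1 + 1), s ^ m * P m (j + 1 - m) x)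
        = (∑ m ∈ Finset.range (j + 1 + 1), s ^ m * (x * P m (j + 1 - m) x))
          + ∑ m ∈ Finset.range (j + 1 + 1), s ^ (m + 1) * P m (j + 1 - m) x := by
      rw [add_mul, Finset.mul_sum, Finset.mul_sum]
      congr 1
      · exact Finset.sum_congr rfl fun m _ => by ring
      · exact Finset.sum_congr rfl fun m _ => by ring
    have hV : chebV (j + 2) x = x * chebV (j + 1) x - chebV j x := chebV_add_two j x
    rw [H1, H2, H3, H4, Bsplit, B1, B2, B0, hV]
    ring

lemma P_NN : ∀ m r, NN r (P m r) := by
  intro m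
  induction m with
  | zero => intro r; exact NN_chebV le_rfl
  | succ m ih =>
    intro r
    show NN r (fun x => ∑ a ∈ Finset.range (r + 1), chebV a x * P m (r - a) x)
    apply NN_sum
    intro a ha
    simp only [Finset.mem_range, Nat.lt_succ_iff] at ha
    have := NN_chebV_mul (a := a) (ih (r - a))
    exact NN_mono (by omega) this

lemma key (s : ℝ) (hs : 0 ≤ s) (j : ℕ) :
    ∃ a : ℕ → ℝ,
      (∀ x, chebV j (x + s) = ∑ k ∈ Finset.range (j + 1), a k * chebV k x) ∧
      (∀ k, 0 ≤ a k) ∧ s ^ j ≤ a 0 ∧ (∀ k, j < k → a k = 0) := by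
  choose e he1 he2 using fun m => P_NN m (j - m)
  refine ⟨fun k => ∑ m ∈ Finset.range (j + 1), s ^ m * (if k ≤ j - m then e m k else 0),
    ?_, ?_, ?_, ?_⟩
  · intro x
    rw [shift_id s j x]
    have step1 : ∑ k ∈ Finset.range (j + 1),
        (∑ m ∈ Finset.range (j + 1), s ^ m * (if k ≤ j - m then e m k else 0)) * chebV k x
        = ∑ m ∈ Finset.range (j + 1), ∑ k ∈ Finset.range (j + 1),
            s ^ m * (if k ≤ j - m then e m k else 0) * chebV k x := by
      rw [Finset.sum_comm]
      exact Finset.sum_congr rfl fun k _ => by rw [Finset.sum_mul]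
    rw [step1]
    apply Finset.sum_congr rfl
    intro m hm
    simp only [Finset.mem_range, Nat.lt_succ_iff] at hm
    rw [he2 m x]
    rw [Finset.mul_sum]
    have hsub : Finset.range (j - m + 1) ⊆ Finset.range (j + 1) :=
      Finset.range_subset_range.2 (by omega)
    rw [← Finset.sum_subset hsub (fun k _ hk => ?_)]
    · apply Finset.sum_congr rfl
      intro k hk
      simp only [Finset.mem_range, Nat.lt_succ_iff] at hk
      rw [if_pos hk]
      ring
    · simp only [Finset.mem_range, Nat.lt_succ_iff] at hk
      rw [if_neg hk]
      ring
  · intro k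
    apply Finset.sum_nonneg
    intro m _
    have h0 : (0:ℝ) ≤ if k ≤ j - m then e m k else 0 := by
      split
      · exact he1 m k
      · exact le_rfl
    exact mul_nonneg (pow_nonneg hs m) h0
  · have hej : e j 0 = 1 := by
      have := he2 j 0
      rw [show j - j = 0 by omega, P_zero] at this
      simp [chebV_zero] at this
      linarith [this]
    have hterm : s ^ j * (if 0 ≤ j - j then e j 0 else 0) = s ^ j := by
      rw [if_pos (by omega), hej]; ring
    calc s ^ j = s ^ j * (if 0 ≤ j - j then e j 0 else 0) := hterm.symm
      _ ≤ _ := by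
        apply Finset.single_le_sum (f := fun m => s ^ m * (if 0 ≤ j - m then e m 0 else 0))
        · intro m _
          have h0 : (0:ℝ) ≤ if 0 ≤ j - m then e m 0 else 0 := by
            split
            · exact he1 m 0
            · exact le_rfl
          exact mul_nonneg (pow_nonneg hs m) h0
        · simp [Finset.mem_range]
  · intro k hk
    apply Finset.sum_eq_zero
    intro m hm
    simp only [Finset.mem_range, Nat.lt_succ_iff] at hm
    rw [if_neg (by omega)]
    ring

/-- If `F = ∑_{j=0}^n c_j V_j` with all `c_j ≥ 0` and some `c_j > 0` with `j ≥ 1`, then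
for any `s > 0` the shifted polynomial `x ↦ F(x + s)` equals `∑_{j=0}^n q_j(s) V_j(x)`
with all `q_j(s) ≥ 0` and `q_0(s) > 0`. -/
theorem cheb_shift_positive_coeffs (n : ℕ) (c : ℕ → ℝ)
    (hc : ∀ j ≤ n, 0 ≤ c j) (hpos : ∃ j, 1 ≤ j ∧ j ≤ n ∧ 0 < c j)
    (s : ℝ) (hs : 0 < s) :
    ∃ q : ℕ → ℝ,
      (∀ x : ℝ, ∑ j ∈ Finset.range (n + 1), c j * chebV j (x + s) =
          ∑ j ∈ Finset.range (n + 1), q j * chebV j x) ∧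
      (∀ j ≤ n, 0 ≤ q j) ∧
      0 < q 0 := by
  choose a ha1 ha2 ha3 ha4 using key s hs.le
  refine ⟨fun k => ∑ j ∈ Finset.range (n + 1), c j * a j k, ?_, ?_, ?_⟩
  · intro x
    have step : ∀ j ∈ Finset.range (n + 1),
        c j * chebV j (x + s) = ∑ k ∈ Finset.range (n + 1), c j * a j k * chebV k x := by
      intro j hj
      simp only [Finset.mem_range, Nat.lt_succ_iff] at hj
      rw [ha1 j x, Finset.mul_sum]
      have hsub : Finset.range (j + 1) ⊆ Finset.range (n + 1) :=
        Finset.range_subset_range.2 (by omega)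
      rw [Finset.sum_subset hsub (fun k _ hk => ?_)]
      · exact Finset.sum_congr rfl fun k _ => by ring
      · simp only [Finset.mem_range, Nat.lt_succ_iff] at hk
        rw [ha4 j k (by omega)]
        ring
    rw [Finset.sum_congr rfl step, Finset.sum_comm]
    exact Finset.sum_congr rfl fun k _ => by rw [Finset.sum_mul]
  · intro k _
    apply Finset.sum_nonneg
    intro j hj
    simp only [Finset.mem_range, Nat.lt_succ_iff] at hj
    exact mul_nonneg (hc j hj) (ha2 j k)
  · obtain ⟨j₀, hj1, hj2, hj3⟩ := hpos
    apply Finset.sum_pos'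
    · intro j hj
      simp only [Finset.mem_range, Nat.lt_succ_iff] at hj
      exact mul_nonneg (hc j hj) (ha2 j 0)
    · refine ⟨j₀, Finset.mem_range.2 (by omega), ?_⟩
      have : s ^ j₀ ≤ a j₀ 0 := ha3 j₀
      have hp : 0 < s ^ j₀ := pow_pos hs j₀
      exact mul_pos hj3 (lt_of_lt_of_le hp this)
end

section
/- Let ν be a probability measure on I = I_1 ∪ I_2 (intervals with disjoint interiors) such that ∫_I V_j dν ≥ 0 for all j ≥ 0. Suppose f = Σ_{j=0}^{n} c_j V_j with all c_j ≥ 0 and f ≤ 0 on I_1. Then ν(I_2) ≥ (c_0 − M_1)/(M_2 − M_1), where M_i = sup_{x ∈ I_i} f(x), provided M_2 > M_1. -/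
open MeasureTheory Set Real

/-- Let `ν` be a Borel probability measure concentrated on `I = [a, c] = I₁ ∪ I₂`,
`I₁ = [a, b]`, `I₂ = [b, c]`, with `∫ V_j dν ≥ 0` for all `j`. If
`f = ∑_{j=0}^n c_j V_j` with all `c_j ≥ 0` and `f ≤ 0` on `I₁`, then
`ν(I₂) ≥ (c₀ - M₁)/(M₂ - M₁)`, where `Mᵢ = sup_{Iᵢ} f`, provided `M₂ > M₁`. -/
theorem measure_lower_bound_cheb (a b c : ℝ) (hab : a ≤ b) (hbc : b ≤ c)
    (ν : Measure ℝ) [IsProbabilityMeasure ν] (hν : ν (Icc a c) = 1)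
    (hcheb : ∀ j : ℕ, 0 ≤ ∫ x in Icc a c, chebV j x ∂ν)
    (n : ℕ) (co : ℕ → ℝ) (hco : ∀ j ≤ n, 0 ≤ co j)
    (f : ℝ → ℝ) (hf : ∀ x, f x = ∑ j ∈ Finset.range (n + 1), co j * chebV j x)
    (hneg : ∀ x ∈ Icc a b, f x ≤ 0)
    (M₁ M₂ : ℝ) (hM₁ : M₁ = sSup (f '' Icc a b)) (hM₂ : M₂ = sSup (f '' Icc b c))
    (hM : M₁ < M₂) :
    ENNReal.ofReal ((co 0 - M₁) / (M₂ - M₁)) ≤ ν (Icc b c) := by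
  have hVcont : ∀ j : ℕ, Continuous (chebV j) := fun j =>
    (Polynomial.Chebyshev.U ℝ j).continuous_aeval.comp (continuous_id.div_const 2)
  have hcont : Continuous f := by
    have hfe : f = fun x => ∑ j ∈ Finset.range (n + 1), co j * chebV j x := funext hf
    rw [hfe]
    exact continuous_finset_sum _ fun j _ => continuous_const.mul (hVcont j)
  have hintf : ∀ s t : ℝ, IntegrableOn f (Icc s t) ν := fun s t => hcont.integrableOn_Icc
  -- lower bound for the integral
  have hlow : co 0 ≤ ∫ x in Icc a c, f x ∂ν := by
    have heq : ∫ x in Icc a c, f x ∂ν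
        = ∑ j ∈ Finset.range (n + 1), co j * ∫ x in Icc a c, chebV j x ∂ν := by
      simp_rw [hf]
      rw [integral_finset_sum _ fun j _ => ((hVcont j).integrableOn_Icc).const_mul _]
      simp_rw [integral_const_mul]
    have h0 : ∫ x in Icc a c, chebV 0 x ∂ν = 1 := by
      have : ∀ x : ℝ, chebV 0 x = 1 := by
        intro x
        simp [chebV, Polynomial.Chebyshev.U_zero]
      simp_rw [this]
      simp [hν, Measure.real]
    rw [heq]
    calc co 0 = co 0 * ∫ x in Icc a c, chebV 0 x ∂ν := by rw [h0, mul_one]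
      _ ≤ _ := by
          refine Finset.single_le_sum (f := fun j => co j * ∫ x in Icc a c, chebV j x ∂ν)
            (fun j hj => mul_nonneg (hco j (Nat.lt_succ_iff.mp (Finset.mem_range.mp hj))) (hcheb j))
            (Finset.mem_range.mpr (Nat.succ_pos n))
  -- split the integral
  have hdisj : Disjoint (Icc a b) (Ioc b c) := by
    simp [Set.disjoint_left]; intro x _ h2 h3; linarith
  have hsplit : ∫ x in Icc a c, f x ∂ν
      = (∫ x in Icc a b, f x ∂ν) + ∫ x in Ioc b c, f x ∂ν := by
    rw [← setIntegral_union hdisj measurableSet_Ioc (hintf a b)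
      ((hintf b c).mono_set Ioc_subset_Icc_self), Icc_union_Ioc_eq_Icc hab hbc]
  set p : ℝ := (ν (Ioc b c)).toReal with hp
  set q : ℝ := (ν (Icc a b)).toReal with hq
  have hpq : q + p = 1 := by
    have := measure_union hdisj measurableSet_Ioc (μ := ν)
    rw [Icc_union_Ioc_eq_Icc hab hbc, hν] at this
    have h1 : (ν (Icc a b) + ν (Ioc b c)).toReal = 1 := by rw [← this]; simp
    rwa [ENNReal.toReal_add (measure_ne_top ν _) (measure_ne_top ν _)] at h1
  -- pointwise bounds by sups
  have hb1 : ∀ x ∈ Icc a b, f x ≤ M₁ := by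
    intro x hx
    rw [hM₁]
    exact le_csSup ((isCompact_Icc.image_of_continuousOn hcont.continuousOn).bddAbove)
      (mem_image_of_mem f hx)
  have hb2 : ∀ x ∈ Ioc b c, f x ≤ M₂ := by
    intro x hx
    rw [hM₂]
    exact le_csSup ((isCompact_Icc.image_of_continuousOn hcont.continuousOn).bddAbove)
      (mem_image_of_mem f (Ioc_subset_Icc_self hx))
  have hi1 : ∫ x in Icc a b, f x ∂ν ≤ M₁ * q := by
    have := setIntegral_mono_on (hintf a b) (integrableOn_const (ne_of_lt (by
      exact lt_of_le_of_lt (measure_mono (Icc_subset_Icc le_rfl hbc)) (by rw [hν]; exact ENNReal.one_lt_top))))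
      measurableSet_Icc hb1
    rwa [setIntegral_const, smul_eq_mul, mul_comm] at this
  have hi2 : ∫ x in Ioc b c, f x ∂ν ≤ M₂ * p := by
    have := setIntegral_mono_on ((hintf b c).mono_set Ioc_subset_Icc_self)
      (integrableOn_const (ne_of_lt (measure_lt_top ν _))) measurableSet_Ioc hb2
    rwa [setIntegral_const, smul_eq_mul, mul_comm] at this
  have hkey : co 0 ≤ M₁ * q + M₂ * p := le_trans hlow (by rw [hsplit]; exact add_le_add hi1 hi2)
  have hqe : q = 1 - p := by linarith
  have hple : (co 0 - M₁) / (M₂ - M₁) ≤ p := by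
    rw [div_le_iff₀ (by linarith)]
    rw [hqe] at hkey
    nlinarith
  calc ENNReal.ofReal ((co 0 - M₁) / (M₂ - M₁)) ≤ ENNReal.ofReal p := ENNReal.ofReal_le_ofReal hple
    _ = ν (Ioc b c) := ENNReal.ofReal_toReal (measure_ne_top ν _)
    _ ≤ ν (Icc b c) := measure_mono Ioc_subset_Icc_self
end

section
/- If X is a finite connected k-regular graph with second largest adjacency eigenvalue μ_1(X) ≤ −1, then X is the complete graph on k + 1 vertices. -/
def adjMat {V : Type*} [Fintype V] (G : SimpleGraph V) [DecidableRel G.Adj] :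
    Matrix V V ℝ :=
  G.adjMatrix ℝ

def IsAdjEigenvalue {V : Type*} [Fintype V] (G : SimpleGraph V) [DecidableRel G.Adj]
    (μ : ℝ) : Prop :=
  ∃ v : V → ℝ, v ≠ 0 ∧ (adjMat G).mulVec v = μ • v

open Matrix in
lemma const_of_eig_k {V : Type*} [Fintype V] [DecidableEq V] (G : SimpleGraph V)
    [DecidableRel G.Adj] (k : ℕ) (hreg : G.IsRegularOfDegree k) (hconn : G.Connected)
    (x : V → ℝ) (hx : (G.adjMatrix ℝ) *ᵥ x = (k : ℝ) • x) : ∀ u w : V, x u = x w := by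
  have hlap : Matrix.toLin' (G.lapMatrix ℝ) x = 0 := by
    rw [Matrix.toLin'_apply]
    ext v
    rw [Pi.zero_apply, SimpleGraph.lapMatrix_mulVec_apply]
    have h1 := congrFun hx v
    rw [SimpleGraph.adjMatrix_mulVec_apply] at h1
    rw [h1, hreg v, Pi.smul_apply, smul_eq_mul, sub_self]
  have h2 := (G.lapMatrix_mulVec_eq_zero_iff_forall_reachable (x := x)).mp (by rwa [Matrix.toLin'_apply] at hlap)
  exact fun u w => h2 u w (hconn.preconnected u w)

lemma trace_eq_sum_eig {V : Type*} [Fintype V] [DecidableEq V] {A : Matrix V V ℝ}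
    (hA : A.IsHermitian) : A.trace = ∑ i, hA.eigenvalues i := by
  conv_lhs => rw [hA.spectral_theorem]
  rw [Unitary.conjStarAlgAut_apply, Matrix.trace_mul_cycle,
    (Unitary.coe_star_mul_self hA.eigenvectorUnitary : _), Matrix.one_mul, Matrix.trace_diagonal]
  simp

lemma orth_contra {V : Type*} [Fintype V] [DecidableEq V] {A : Matrix V V ℝ} (hA : A.IsHermitian)
    (i j : V) (hij : i ≠ j)
    (hvi : ∀ u w : V, hA.eigenvectorBasis i u = hA.eigenvectorBasis i w)
    (hvj : ∀ u w : V, hA.eigenvectorBasis j u = hA.eigenvectorBasis j w)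
    (u0 : V) : False := by
  have horth := hA.eigenvectorBasis.orthonormal.2 hij
  simp only [] at horth
  rw [PiLp.inner_apply] at horth
  simp only [RCLike.inner_apply, starRingEnd_apply, star_trivial] at horth
  have hci : hA.eigenvectorBasis i u0 ≠ 0 := by
    intro h
    exact hA.eigenvectorBasis.orthonormal.ne_zero i (by ext v; rw [hvi v u0, h]; rfl)
  have hcj : hA.eigenvectorBasis j u0 ≠ 0 := by
    intro h
    exact hA.eigenvectorBasis.orthonormal.ne_zero j (by ext v; rw [hvj v u0, h]; rfl)
  have : ∑ u : V, hA.eigenvectorBasis i u * hA.eigenvectorBasis j u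
      = (Fintype.card V : ℝ) * (hA.eigenvectorBasis i u0 * hA.eigenvectorBasis j u0) := by
    rw [Finset.sum_congr rfl (fun u _ => by rw [hvi u u0, hvj u u0])]
    rw [Finset.sum_const, nsmul_eq_mul, Fintype.card]
  simp only [mul_comm (hA.eigenvectorBasis j _)] at horth
  rw [this] at horth
  have hn0 : (Fintype.card V : ℝ) ≠ 0 := by
    exact_mod_cast (Fintype.card_pos_iff.mpr ⟨u0⟩).ne'
  exact (mul_ne_zero hn0 (mul_ne_zero hci hcj)) horth

/-- If `X` is a finite connected `k`-regular graph with second largest adjacency eigenvalue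
`μ₁(X) ≤ -1`, then `X` is the complete graph on `k + 1` vertices. -/
theorem complete_of_mu_le_neg_one {V : Type*} [Fintype V] (G : SimpleGraph V) [DecidableRel G.Adj]
    (k : ℕ) (hk : 1 ≤ k) (hreg : G.IsRegularOfDegree k) (hconn : G.Connected)
    (hμ : ∀ μ : ℝ, IsAdjEigenvalue G μ → μ = k ∨ μ ≤ -1) :
    Nonempty (G ≃g (⊤ : SimpleGraph (Fin (k + 1)))) := by
  classical
  obtain ⟨u0⟩ := hconn.nonempty
  have hA : (adjMat G).IsHermitian := by
    rw [Matrix.IsHermitian, Matrix.conjTranspose_eq_transpose_of_trivial]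
    exact G.isSymm_adjMatrix
  -- every eigenvalue is k or ≤ -1
  have heig : ∀ i : V, hA.eigenvalues i = (k : ℝ) ∨ hA.eigenvalues i ≤ -1 := by
    intro i
    refine hμ _ ⟨⇑(hA.eigenvectorBasis i), ?_, hA.mulVec_eigenvectorBasis i⟩
    intro h
    exact hA.eigenvectorBasis.orthonormal.ne_zero i (by ext v; exact congrFun h v)
  -- at most one index with eigenvalue k
  have huniq : ∀ i j : V, hA.eigenvalues i = (k : ℝ) → hA.eigenvalues j = (k : ℝ) → i = j := by
    intro i j hi hj
    by_contra hij
    have hvi : ∀ u w : V, hA.eigenvectorBasis i u = hA.eigenvectorBasis i w :=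
      const_of_eig_k G k hreg hconn _ (by rw [← hi]; exact hA.mulVec_eigenvectorBasis i)
    have hvj : ∀ u w : V, hA.eigenvectorBasis j u = hA.eigenvectorBasis j w :=
      const_of_eig_k G k hreg hconn _ (by rw [← hj]; exact hA.mulVec_eigenvectorBasis j)
    exact orth_contra hA i j hij hvi hvj u0
  -- the sum of eigenvalues is zero
  have htr : (0 : ℝ) = ∑ i, hA.eigenvalues i := by
    rw [← trace_eq_sum_eig hA]
    simp [adjMat, Matrix.trace, Matrix.diag]
  have hcard : 1 ≤ Fintype.card V := Fintype.card_pos_iff.mpr ⟨u0⟩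
  -- existence of an index with eigenvalue k
  obtain ⟨i0, hi0⟩ : ∃ i, hA.eigenvalues i = (k : ℝ) := by
    by_contra h
    push_neg at h
    have hle : ∑ i, hA.eigenvalues i ≤ ∑ _i : V, (-1 : ℝ) :=
      Finset.sum_le_sum fun i _ => (heig i).resolve_left (h i)
    rw [← htr, Finset.sum_const, nsmul_eq_mul] at hle
    have : (1 : ℝ) ≤ ((Finset.univ : Finset V).card : ℝ) := by
      exact_mod_cast hcard
    linarith
  -- card V ≤ k + 1
  have hle : Fintype.card V ≤ k + 1 := by
    have hsum : ∑ i ∈ Finset.univ.erase i0, hA.eigenvalues i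
        ≤ (Finset.univ.erase i0).card • (-1 : ℝ) := by
      refine Finset.sum_le_card_nsmul _ _ _ fun i hi => ?_
      refine (heig i).resolve_left fun hik => ?_
      exact (Finset.mem_erase.mp hi).1 (huniq i i0 hik hi0)
    rw [Finset.card_erase_of_mem (Finset.mem_univ i0), Finset.card_univ] at hsum
    have hsplit : ∑ i ∈ Finset.univ.erase i0, hA.eigenvalues i + hA.eigenvalues i0
        = ∑ i, hA.eigenvalues i := Finset.sum_erase_add _ _ (Finset.mem_univ i0)
    rw [← htr, hi0] at hsplit
    have hcast : ((Fintype.card V - 1 : ℕ) : ℝ) = (Fintype.card V : ℝ) - 1 := by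
      push_cast [Nat.cast_sub hcard]
      ring
    rw [nsmul_eq_mul, hcast] at hsum
    have : (Fintype.card V : ℝ) ≤ (k : ℝ) + 1 := by nlinarith
    exact_mod_cast this
  -- card V ≥ k + 1
  have hge : k + 1 ≤ Fintype.card V := by
    have h1 : (insert u0 (G.neighborFinset u0)).card = k + 1 := by
      rw [Finset.card_insert_of_notMem (G.notMem_neighborFinset_self u0),
        G.card_neighborFinset_eq_degree, hreg u0]
    calc k + 1 = (insert u0 (G.neighborFinset u0)).card := h1.symm
      _ ≤ Finset.univ.card := Finset.card_le_univ _
      _ = Fintype.card V := Finset.card_univ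
  have hn : Fintype.card V = k + 1 := le_antisymm hle hge
  -- G is complete
  have hcomp : ∀ u w : V, u ≠ w → G.Adj u w := by
    intro u w huw
    have hsub : G.neighborFinset u ⊆ Finset.univ.erase u := fun x hx =>
      Finset.mem_erase.mpr ⟨(G.ne_of_adj (G.mem_neighborFinset u x |>.mp hx)).symm,
        Finset.mem_univ x⟩
    have hcards : (Finset.univ.erase u).card ≤ (G.neighborFinset u).card := by
      rw [Finset.card_erase_of_mem (Finset.mem_univ u), Finset.card_univ, hn,
        G.card_neighborFinset_eq_degree, hreg u]
      simp
    have heqf : G.neighborFinset u = Finset.univ.erase u :=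
      Finset.eq_of_subset_of_card_le hsub hcards
    have : w ∈ G.neighborFinset u := by
      rw [heqf]
      exact Finset.mem_erase.mpr ⟨huw.symm, Finset.mem_univ w⟩
    exact (G.mem_neighborFinset u w).mp this
  -- build the isomorphism
  let e : V ≃ Fin (k + 1) := Fintype.equivFinOfCardEq hn
  refine ⟨⟨e, ?_⟩⟩
  intro a b
  simp only [SimpleGraph.top_adj, ne_eq, EmbeddingLike.apply_eq_iff_eq]
  constructor
  · exact fun h => hcomp a b h
  · exact fun h => G.ne_of_adj h
end

section
/- If X is a finite connected k-regular graph with second largest adjacency eigenvalue μ_1(X) ≤ 0, then X has at most 2k + 2 vertices. -/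
open Matrix SimpleGraph Finset
open scoped RealInnerProductSpace

section Aux

variable {V : Type*} [Fintype V] [DecidableEq V] (G : SimpleGraph V) [DecidableRel G.Adj]

theorem auxTraceEq (A : Matrix V V ℝ) (hA : A.IsHermitian) :
    A.trace = ∑ i, hA.eigenvalues i := by
  set U : Matrix V V ℝ := (hA.eigenvectorUnitary : Matrix V V ℝ) with hUdef
  have hU : star U * U = 1 := (Matrix.mem_unitaryGroup_iff').mp (hA.eigenvectorUnitary).2
  conv_lhs => rw [hA.spectral_theorem, Unitary.conjStarAlgAut_apply]
  rw [trace_mul_cycle, hU, one_mul, trace_diagonal]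
  simp

theorem auxTraceSqEq (A : Matrix V V ℝ) (hA : A.IsHermitian) :
    (A * A).trace = ∑ i, hA.eigenvalues i ^ 2 := by
  set U : Matrix V V ℝ := (hA.eigenvectorUnitary : Matrix V V ℝ) with hUdef
  have hU : star U * U = 1 := (Matrix.mem_unitaryGroup_iff').mp (hA.eigenvectorUnitary).2
  have hU' : ∀ X : Matrix V V ℝ, star U * (U * X) = X := fun X => by
    rw [← mul_assoc, hU, one_mul]
  conv_lhs => rw [hA.spectral_theorem, Unitary.conjStarAlgAut_apply, ← hUdef]
  simp only [mul_assoc]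
  rw [trace_mul_comm]
  simp only [mul_assoc, hU']
  rw [trace_mul_comm]
  simp only [mul_assoc, hU']
  rw [diagonal_mul_diagonal, trace_diagonal]
  simp [sq]

theorem auxEigBound (k : ℕ) (hreg : G.IsRegularOfDegree k) (μ : ℝ) (v : V → ℝ) (hv0 : v ≠ 0)
    (hv : (G.adjMatrix ℝ).mulVec v = μ • v) : |μ| ≤ k := by
  have hne : (Finset.univ : Finset V).Nonempty := by
    rcases Function.ne_iff.mp hv0 with ⟨x, -⟩
    exact ⟨x, mem_univ x⟩
  obtain ⟨i, -, hi⟩ := Finset.exists_max_image univ (fun x => |v x|) hne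
  have hvi : 0 < |v i| := by
    rcases Function.ne_iff.mp hv0 with ⟨x, hx⟩
    exact lt_of_lt_of_le (abs_pos.mpr (by simpa using hx)) (hi x (mem_univ x))
  have key : |μ| * |v i| ≤ k * |v i| := by
    have h1 : (G.adjMatrix ℝ).mulVec v i = μ * v i := by rw [hv]; rfl
    rw [adjMatrix_mulVec_apply] at h1
    calc |μ| * |v i| = |∑ u ∈ G.neighborFinset i, v u| := by rw [← abs_mul, ← h1]
      _ ≤ ∑ u ∈ G.neighborFinset i, |v u| := Finset.abs_sum_le_sum_abs _ _
      _ ≤ ∑ u ∈ G.neighborFinset i, |v i| := Finset.sum_le_sum fun u _ => hi u (mem_univ u)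
      _ = k * |v i| := by
          rw [Finset.sum_const, show #(G.neighborFinset i) = k from hreg i]
          simp [nsmul_eq_mul]
  exact le_of_mul_le_mul_right key hvi

theorem auxKerMem (k : ℕ) (hreg : G.IsRegularOfDegree k) (v : V → ℝ)
    (hv : (G.adjMatrix ℝ).mulVec v = (k : ℝ) • v) :
    v ∈ LinearMap.ker (Matrix.toLin' (G.lapMatrix ℝ)) := by
  rw [LinearMap.mem_ker, Matrix.toLin'_apply]
  rw [lapMatrix, sub_mulVec, hv]
  ext x
  simp [degMatrix, mulVec_diagonal, hreg x]

theorem auxKerRank (hconn : G.Connected) :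
    Module.finrank ℝ (LinearMap.ker (Matrix.toLin' (G.lapMatrix ℝ))) = 1 := by
  rw [← card_connectedComponent_eq_finrank_ker_toLin'_lapMatrix]
  have h1 : Subsingleton G.ConnectedComponent := hconn.preconnected.subsingleton_connectedComponent
  have h2 : Nonempty V := hconn.nonempty
  have h3 : Nonempty G.ConnectedComponent := ⟨G.connectedComponentMk (Classical.arbitrary _)⟩
  exact Fintype.card_eq_one_iff.mpr ⟨Classical.arbitrary _, fun y => Subsingleton.elim _ _⟩

/-- Multiplicity of the eigenvalue `k` is at most one. -/
theorem auxMultOne (k : ℕ) (hreg : G.IsRegularOfDegree k) (hconn : G.Connected)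
    (A : Matrix V V ℝ) (hAdef : A = G.adjMatrix ℝ) (hA : A.IsHermitian)
    (i j : V) (hij : i ≠ j) (hik : hA.eigenvalues i = k) (hjk : hA.eigenvalues j = k) :
    False := by
  set K := LinearMap.ker (Matrix.toLin' (G.lapMatrix ℝ)) with hK
  have hmemi : (⇑(hA.eigenvectorBasis i) : V → ℝ) ∈ K := by
    apply auxKerMem G k hreg
    rw [← hAdef, hA.mulVec_eigenvectorBasis i, hik]
  have hmemj : (⇑(hA.eigenvectorBasis j) : V → ℝ) ∈ K := by
    apply auxKerMem G k hreg
    rw [← hAdef, hA.mulVec_eigenvectorBasis j, hjk]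
  have hrank : Module.finrank ℝ K ≤ 1 := le_of_eq (auxKerRank G hconn)
  obtain ⟨v₀, hv₀⟩ := finrank_le_one_iff.mp hrank
  obtain ⟨a, ha⟩ := hv₀ ⟨_, hmemi⟩
  obtain ⟨b, hb⟩ := hv₀ ⟨_, hmemj⟩
  set u : V → ℝ := (v₀ : V → ℝ) with hu
  have ha' : ∀ x, hA.eigenvectorBasis i x = a * u x := fun x => by
    have := congrArg (fun w : K => (w : V → ℝ) x) ha
    simpa using this.symm
  have hb' : ∀ x, hA.eigenvectorBasis j x = b * u x := fun x => by
    have := congrArg (fun w : K => (w : V → ℝ) x) hb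
    simpa using this.symm
  set s : ℝ := ∑ x, u x * u x with hs
  have horth : a * b * s = 0 := by
    have h : ⟪hA.eigenvectorBasis i, hA.eigenvectorBasis j⟫ = 0 :=
      hA.eigenvectorBasis.orthonormal.2 hij
    rw [PiLp.inner_apply] at h
    simp only [RCLike.inner_apply, conj_trivial] at h
    calc a * b * s = ∑ x, (a * u x) * (b * u x) := by
          rw [Finset.mul_sum]; congr 1; ext x; ring
      _ = 0 := by rw [← h]; congr 1; ext x; rw [ha' x, hb' x]; ring
  have hnormi : a * a * s = 1 := by
    have h2 : ⟪hA.eigenvectorBasis i, hA.eigenvectorBasis i⟫ = 1 := by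
      rw [real_inner_self_eq_norm_sq, hA.eigenvectorBasis.orthonormal.1 i]; norm_num
    rw [PiLp.inner_apply] at h2
    simp only [RCLike.inner_apply, conj_trivial] at h2
    calc a * a * s = ∑ x, (a * u x) * (a * u x) := by
          rw [Finset.mul_sum]; congr 1; ext x; ring
      _ = 1 := by rw [← h2]; congr 1; ext x; rw [ha' x]
  have hnormj : b * b * s = 1 := by
    have h2 : ⟪hA.eigenvectorBasis j, hA.eigenvectorBasis j⟫ = 1 := by
      rw [real_inner_self_eq_norm_sq, hA.eigenvectorBasis.orthonormal.1 j]; norm_num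
    rw [PiLp.inner_apply] at h2
    simp only [RCLike.inner_apply, conj_trivial] at h2
    calc b * b * s = ∑ x, (b * u x) * (b * u x) := by
          rw [Finset.mul_sum]; congr 1; ext x; ring
      _ = 1 := by rw [← h2]; congr 1; ext x; rw [hb' x]
  nlinarith [horth, hnormi, hnormj]

end Aux

/-- If `X` is a finite connected `k`-regular graph with second largest adjacency eigenvalue
`μ₁(X) ≤ 0`, then `X` has at most `2k + 2` vertices. -/
theorem vertex_bound_mu_le_zero {V : Type*} [Fintype V] (G : SimpleGraph V) [DecidableRel G.Adj]
    (k : ℕ) (hk : 1 ≤ k) (hreg : G.IsRegularOfDegree k) (hconn : G.Connected)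
    (hμ : ∀ μ : ℝ, IsAdjEigenvalue G μ → μ = k ∨ μ ≤ 0) :
    Fintype.card V ≤ 2 * k + 2 := by
  classical
  set n := Fintype.card V with hn
  set A : Matrix V V ℝ := G.adjMatrix ℝ with hAdef
  have hA : A.IsHermitian := by
    rw [Matrix.IsHermitian, Matrix.conjTranspose_eq_transpose_of_trivial]
    exact G.isSymm_adjMatrix
  set lam : V → ℝ := hA.eigenvalues with hlam
  -- each lam i is an eigenvalue of G
  have heig : ∀ i : V, IsAdjEigenvalue G (lam i) := by
    intro i
    refine ⟨⇑(hA.eigenvectorBasis i), ?_, hA.mulVec_eigenvectorBasis i⟩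
    have h := hA.eigenvectorBasis.orthonormal.ne_zero i
    intro hc
    apply h
    ext x
    exact congrFun hc x
  have hbound : ∀ i : V, |lam i| ≤ k := by
    intro i
    obtain ⟨v, hv0, hv⟩ := heig i
    exact auxEigBound G k hreg (lam i) v hv0 hv
  -- trace identities
  have hsum : ∑ i, lam i = 0 := by
    rw [← auxTraceEq A hA, hAdef, SimpleGraph.trace_adjMatrix]
  have hsumsq : ∑ i, lam i ^ 2 = (n : ℝ) * k := by
    rw [← auxTraceSqEq A hA, hAdef, Matrix.trace]
    have : ∀ i : V, (G.adjMatrix ℝ * G.adjMatrix ℝ).diag i = (k : ℝ) := by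
      intro i
      rw [Matrix.diag_apply, SimpleGraph.adjMatrix_mul_self_apply_self, hreg i]
    rw [Finset.sum_congr rfl fun i _ => this i, Finset.sum_const, hn]
    simp [nsmul_eq_mul]
  -- existence of an index with eigenvalue k
  have hnpos : 0 < n := Fintype.card_pos_iff.mpr hconn.nonempty
  have hex : ∃ i₀ : V, lam i₀ = k := by
    by_contra hc
    push_neg at hc
    have hle : ∀ i : V, lam i ≤ 0 := fun i => (hμ (lam i) (heig i)).resolve_left (hc i)
    have hall : ∀ i ∈ Finset.univ, lam i = 0 :=
      (Finset.sum_eq_zero_iff_of_nonpos fun i _ => hle i).mp hsum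
    have : ((n : ℝ)) * k = 0 := by
      rw [← hsumsq]
      exact Finset.sum_eq_zero fun i hi => by rw [hall i hi]; ring
    have : (n : ℝ) * k > 0 := by positivity
    linarith
  obtain ⟨i₀, hi₀⟩ := hex
  -- all other eigenvalues are ≤ 0
  have hothers : ∀ j : V, j ≠ i₀ → lam j ≤ 0 := by
    intro j hj
    rcases hμ (lam j) (heig j) with h | h
    · exact absurd (auxMultOne G k hreg hconn A hAdef hA j i₀ hj h hi₀) id
    · exact h
  -- sum over others
  have hsplit : ∑ j ∈ Finset.univ.erase i₀, lam j = -(k : ℝ) := by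
    have := Finset.add_sum_erase Finset.univ lam (Finset.mem_univ i₀)
    rw [hsum] at this
    rw [hi₀] at this
    linarith
  have hsplitsq : (k : ℝ) ^ 2 + ∑ j ∈ Finset.univ.erase i₀, lam j ^ 2 = (n : ℝ) * k := by
    have h := Finset.add_sum_erase Finset.univ (fun j => lam j ^ 2) (Finset.mem_univ i₀)
    rw [hsumsq] at h
    have h2 : lam i₀ ^ 2 = (k : ℝ) ^ 2 := by rw [hi₀]
    linarith
  have hsqle : ∑ j ∈ Finset.univ.erase i₀, lam j ^ 2
      ≤ ∑ j ∈ Finset.univ.erase i₀, (k : ℝ) * (-(lam j)) := by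
    apply Finset.sum_le_sum
    intro j hj
    have h1 : lam j ≤ 0 := hothers j (Finset.ne_of_mem_erase hj)
    have h2 : -(k : ℝ) ≤ lam j := by
      have := hbound j
      rw [abs_le] at this
      exact this.1
    nlinarith
  have hfinal : (n : ℝ) * k ≤ 2 * k ^ 2 := by
    have h3 : ∑ j ∈ Finset.univ.erase i₀, (k : ℝ) * (-(lam j)) = (k : ℝ) ^ 2 := by
      rw [← Finset.mul_sum, Finset.sum_neg_distrib, hsplit]
      ring
    rw [h3] at hsqle
    linarith
  have hkpos : (0 : ℝ) < k := by exact_mod_cast hk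
  have hreal : (n : ℝ) ≤ 2 * k := by
    have h2k : (n : ℝ) * k ≤ (2 * k) * k := by nlinarith [hfinal]
    exact le_of_mul_le_mul_right h2k hkpos
  have hnat : n ≤ 2 * k := by exact_mod_cast hreal
  omega
end

section
/- Let X be a finite connected k-regular graph on n vertices with adjacency eigenvalues μ_0, ..., μ_{n−1}. Then for every nonnegative integer m, (k−1)^{m/2} · Σ_{j=0}^{n−1} U_m(μ_j / (2√(k−1))) ≥ 0, where U_m is the m-th Chebyshev polynomial of the second kind. -/
open Matrix

namespace TFAux

lemma sum_delta {α : Type*} [Fintype α] [DecidableEq α] (a : α) (v : ℝ) (f : α → ℝ)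
    (h : ∀ x, f x = if x = a then v else 0) : ∑ x, f x = v := by
  simp [h]

lemma sum_delta2 {α β : Type*} [Fintype α] [Fintype β] [DecidableEq α] [DecidableEq β]
    (a : α) (b : β) (v : ℝ) (f : α → β → ℝ)
    (h : ∀ x y, f x y = if x = a ∧ y = b then v else 0) : ∑ x, ∑ y, f x y = v := by
  simp [h, ite_and]

variable {n : ℕ} (G : SimpleGraph (Fin n)) [DecidableRel G.Adj]

def NN : Matrix (Fin n × Fin n) (Fin n × Fin n) ℝ := fun p q =>
  if G.Adj p.1 p.2 ∧ p.2 = q.1 ∧ G.Adj q.1 q.2 ∧ q.2 ≠ p.1 then 1 else 0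

def SS : Matrix (Fin n) (Fin n × Fin n) ℝ := fun i p =>
  if i = p.1 ∧ G.Adj p.1 p.2 then 1 else 0

def TT : Matrix (Fin n × Fin n) (Fin n) ℝ := fun p j =>
  if G.Adj p.1 p.2 ∧ p.2 = j then 1 else 0

def RR : Matrix (Fin n) (Fin n × Fin n) ℝ := fun i p =>
  if i = p.2 ∧ G.Adj p.1 p.2 then 1 else 0

lemma ST : SS G * TT G = G.adjMatrix ℝ := by
  ext i j
  rw [mul_apply, Fintype.sum_prod_type]
  rw [sum_delta2 i j (if G.Adj i j then 1 else 0)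
    (fun x y => SS G i (x, y) * TT G (x, y) j) ?_]
  · simp [SimpleGraph.adjMatrix]
  · intro x y
    simp only [SS, TT]
    split_ifs <;> simp_all

lemma AS : G.adjMatrix ℝ * SS G = SS G * NN G + RR G := by
  ext i p
  obtain ⟨c, d⟩ := p
  rw [Matrix.add_apply, mul_apply, mul_apply, Fintype.sum_prod_type]
  rw [sum_delta c (if G.Adj i c ∧ G.Adj c d then 1 else 0)
    (fun x => G.adjMatrix ℝ i x * SS G x (c, d)) ?_]
  · rw [sum_delta2 i c (if G.Adj i c ∧ G.Adj c d ∧ d ≠ i then 1 else 0)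
      (fun x y => SS G i (x, y) * NN G (x, y) (c, d)) ?_]
    · simp only [RR]
      by_cases hcd : G.Adj c d <;> by_cases hic : G.Adj i c <;> by_cases hdi : d = i <;>
        simp_all [G.adj_symm, eq_comm]
    · intro x y
      simp only [SS, NN]
      split_ifs <;> simp_all
  · intro x
    simp only [SS, SimpleGraph.adjMatrix_apply]
    split_ifs <;> simp_all

variable {k : ℕ}

lemma RN (hk : 1 ≤ k) (hreg : G.IsRegularOfDegree k) :
    RR G * NN G = ((k : ℝ) - 1) • SS G := by
  ext i p
  obtain ⟨e, f⟩ := p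
  rw [mul_apply, Fintype.sum_prod_type]
  have h1 : ∀ c, (∑ d, RR G i (c, d) * NN G (c, d) (e, f)) =
      if G.Adj c i ∧ i = e ∧ G.Adj e f ∧ f ≠ c then 1 else 0 := by
    intro c
    apply sum_delta i
    intro d
    simp only [RR, NN]
    split_ifs <;> solve | rfl | simp_all | aesop
  simp only [h1]
  rw [Finset.sum_boole]
  by_cases h : i = e ∧ G.Adj e f
  · obtain ⟨rfl, hef⟩ := h
    have hmem : f ∈ G.neighborFinset i := by simpa using hef
    have hfilter : (Finset.univ.filter fun c => G.Adj c i ∧ i = i ∧ G.Adj i f ∧ f ≠ c) =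
        (G.neighborFinset i).erase f := by
      ext c
      simp [hef, G.adj_comm, eq_comm]
      tauto
    rw [hfilter, Finset.card_erase_of_mem hmem]
    have hdeg : (G.neighborFinset i).card = k := hreg i
    rw [hdeg]
    rw [Nat.cast_sub hk]
    simp [SS, hef]
  · have hfilter : (Finset.univ.filter fun c => G.Adj c i ∧ i = e ∧ G.Adj e f ∧ f ≠ c) = ∅ := by
      ext c; simp only [Finset.mem_filter, Finset.mem_univ, true_and, Finset.notMem_empty,
        iff_false]
      intro hc; exact h ⟨hc.2.1, hc.2.2.1⟩
    rw [hfilter]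
    simp only [Finset.card_empty, Nat.cast_zero, Matrix.smul_apply, SS, smul_eq_mul]
    rw [if_neg (fun hc => h ⟨hc.1, hc.2⟩)]
    simp

lemma RT (hreg : G.IsRegularOfDegree k) :
    RR G * TT G = (k : ℝ) • (1 : Matrix (Fin n) (Fin n) ℝ) := by
  ext i j
  rw [mul_apply, Fintype.sum_prod_type]
  have h1 : ∀ c, (∑ d, RR G i (c, d) * TT G (c, d) j) =
      if G.Adj c i ∧ i = j then 1 else 0 := by
    intro c
    apply sum_delta i
    intro d
    simp only [RR, TT]
    split_ifs <;> solve | rfl | simp_all | aesop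
  simp only [h1]
  rw [Finset.sum_boole]
  by_cases h : i = j
  · subst h
    have hfilter : (Finset.univ.filter fun c => G.Adj c i ∧ i = i) = G.neighborFinset i := by
      ext c; simp [G.adj_comm]
    rw [hfilter]
    have hdeg : (G.neighborFinset i).card = k := hreg i
    simp [hdeg, Matrix.one_apply]
  · have hfilter : (Finset.univ.filter fun c => G.Adj c i ∧ i = j) = ∅ := by
      ext c; simp [h]
    rw [hfilter]
    simp [Matrix.one_apply, h]

lemma SN_eq : SS G * NN G = G.adjMatrix ℝ * SS G - RR G := by
  rw [AS]; abel

lemma W1 (hreg : G.IsRegularOfDegree k) :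
    SS G * NN G * TT G = G.adjMatrix ℝ * G.adjMatrix ℝ - (k : ℝ) • 1 := by
  rw [SN_eq, Matrix.sub_mul, Matrix.mul_assoc, ST, RT G hreg]

lemma Wstep (hk : 1 ≤ k) (hreg : G.IsRegularOfDegree k) (m : ℕ) :
    SS G * NN G ^ (m + 2) * TT G =
      G.adjMatrix ℝ * (SS G * NN G ^ (m + 1) * TT G)
        - ((k : ℝ) - 1) • (SS G * NN G ^ m * TT G) := by
  have h1 : SS G * NN G ^ (m + 2) =
      G.adjMatrix ℝ * (SS G * NN G ^ (m + 1)) - ((k : ℝ) - 1) • (SS G * NN G ^ m) := by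
    rw [pow_succ' (NN G) (m + 1), ← Matrix.mul_assoc, SN_eq, Matrix.sub_mul, Matrix.mul_assoc]
    congr 1
    rw [pow_succ' (NN G) m, ← Matrix.mul_assoc, RN G hk hreg, Matrix.smul_mul]
  rw [h1, Matrix.sub_mul, Matrix.smul_mul, Matrix.mul_assoc]

def MM (G : SimpleGraph (Fin n)) [DecidableRel G.Adj] : ℕ → Matrix (Fin n) (Fin n) ℝ
  | 0 => 1
  | 1 => G.adjMatrix ℝ
  | (m + 2) => MM G m + SS G * NN G ^ (m + 1) * TT G

lemma MM_zero : MM G 0 = 1 := rfl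
lemma MM_one : MM G 1 = G.adjMatrix ℝ := rfl
lemma MM_two (m : ℕ) : MM G (m + 2) = MM G m + SS G * NN G ^ (m + 1) * TT G := rfl

lemma mul_entry_nonneg {α β γ : Type*} [Fintype β] {P : Matrix α β ℝ} {Q : Matrix β γ ℝ}
    (hP : ∀ i j, 0 ≤ P i j) (hQ : ∀ i j, 0 ≤ Q i j) : ∀ i j, 0 ≤ (P * Q) i j := by
  intro i j
  rw [mul_apply]
  exact Finset.sum_nonneg fun x _ => mul_nonneg (hP i x) (hQ x j)

lemma SS_nonneg : ∀ i j, 0 ≤ SS G i j := by intro i j; simp only [SS]; positivity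
lemma TT_nonneg : ∀ i j, 0 ≤ TT G i j := by intro i j; simp only [TT]; positivity
lemma NN_nonneg : ∀ i j, 0 ≤ NN G i j := by intro i j; simp only [NN]; positivity

lemma NNpow_nonneg (m : ℕ) : ∀ i j, 0 ≤ (NN G ^ m) i j := by
  induction m with
  | zero =>
      intro i j
      rw [pow_zero, Matrix.one_apply]
      positivity
  | succ m ih =>
      rw [pow_succ]
      exact mul_entry_nonneg ih (NN_nonneg G)

lemma MM_nonneg (m : ℕ) : ∀ i j, 0 ≤ MM G m i j := by
  induction m using Nat.twoStepInduction with
  | zero =>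
      intro i j
      rw [MM_zero, Matrix.one_apply]
      positivity
  | one =>
      intro i j
      rw [MM_one, SimpleGraph.adjMatrix_apply]
      positivity
  | more m ih _ =>
      intro i j
      rw [MM_two, Matrix.add_apply]
      exact add_nonneg (ih i j)
        (mul_entry_nonneg (mul_entry_nonneg (SS_nonneg G) (NNpow_nonneg G (m + 1)))
          (TT_nonneg G) i j)

set_option maxHeartbeats 2000000 in
lemma MMrec (hk : 1 ≤ k) (hreg : G.IsRegularOfDegree k) (m : ℕ) :
    MM G (m + 2) = G.adjMatrix ℝ * MM G (m + 1) - ((k : ℝ) - 1) • MM G m := by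
  induction m using Nat.twoStepInduction with
  | zero =>
      rw [MM_two G 0, show (0 : ℕ) + 1 = 1 from rfl, MM_zero, MM_one, pow_one, W1 G hreg,
        sub_smul, one_smul]
      abel
  | one =>
      rw [MM_two G 1, show (1 : ℕ) + 1 = 0 + 2 from rfl, Wstep G hk hreg 0, MM_two G 0,
        MM_zero, MM_one, show (0 : ℕ) + 1 = 1 from rfl, pow_one, pow_zero, Matrix.mul_one,
        ST, W1 G hreg, Matrix.mul_add, Matrix.mul_one]
      abel
  | more m ih _ =>
      conv_lhs => rw [MM_two G (m + 2), ih, show m + 2 + 1 = m + 1 + 2 from rfl,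
        Wstep G hk hreg (m + 1)]
      conv_rhs => rw [show m + 2 + 1 = m + 1 + 2 from rfl, MM_two G (m + 1), MM_two G m]
      rw [Matrix.mul_add, smul_add]
      abel

end TFAux

/-- The trace formula inequality: for a finite connected `k`-regular graph on `n` vertices
with adjacency eigenvalues `μ_0, …, μ_{n-1}`, for every `m ≥ 0`,
`(k-1)^{m/2} ∑_j U_m(μ_j / (2√(k-1))) ≥ 0`. -/
theorem trace_formula_inequality (n : ℕ) (G : SimpleGraph (Fin n))
    [DecidableRel G.Adj] (k : ℕ) (hk : 2 ≤ k)
    (hreg : G.IsRegularOfDegree k) (hconn : G.Connected)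
    (hA : (G.adjMatrix ℝ).IsHermitian) (m : ℕ) :
    0 ≤ Real.sqrt (k - 1) ^ m *
        ∑ j : Fin n, (Polynomial.Chebyshev.U ℝ m).eval
          (hA.eigenvalues j / (2 * Real.sqrt (k - 1))) := by
  classical
  have hk1 : 1 ≤ k := by omega
  have hkR : (2:ℝ) ≤ (k:ℝ) := by exact_mod_cast hk
  have hpos : (0:ℝ) < (k:ℝ) - 1 := by linarith
  set q : ℝ := Real.sqrt ((k:ℝ) - 1) with hqdef
  have hq0 : 0 < q := Real.sqrt_pos.mpr hpos
  have hq2 : q ^ 2 = (k:ℝ) - 1 := Real.sq_sqrt (le_of_lt hpos)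
  set μ : Fin n → ℝ := hA.eigenvalues with hμ
  set u : ℕ → Fin n → ℝ :=
    fun m j => q ^ m * (Polynomial.Chebyshev.U ℝ m).eval (μ j / (2 * q)) with hu
  have u0 : u 0 = fun _ => (1:ℝ) := by
    funext j
    simp [hu, Polynomial.Chebyshev.U_zero]
  have u1 : u 1 = μ := by
    funext j
    simp only [hu, Nat.cast_one, Polynomial.Chebyshev.U_one, Polynomial.eval_mul,
      Polynomial.eval_ofNat, Polynomial.eval_X, pow_one]
    field_simp
  have urec : ∀ l j, u (l + 2) j = μ j * u (l + 1) j - ((k:ℝ) - 1) * u l j := by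
    intro l j
    have hcast : ((l + 2 : ℕ) : ℤ) = (l : ℤ) + 2 := by push_cast; ring
    have hcast1 : ((l + 1 : ℕ) : ℤ) = (l : ℤ) + 1 := by push_cast; ring
    simp only [hu]
    rw [hcast, hcast1, Polynomial.Chebyshev.U_add_two]
    simp only [Polynomial.eval_sub, Polynomial.eval_mul, Polynomial.eval_ofNat,
      Polynomial.eval_X]
    rw [show ((k:ℝ) - 1) = q ^ 2 from hq2.symm]
    field_simp
    ring
  set V : Matrix (Fin n) (Fin n) ℝ := (hA.eigenvectorUnitary : Matrix (Fin n) (Fin n) ℝ) with hV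
  have hVU : V * star V = 1 := Matrix.mem_unitaryGroup_iff.mp hA.eigenvectorUnitary.2
  have hUV : star V * V = 1 := Matrix.mem_unitaryGroup_iff'.mp hA.eigenvectorUnitary.2
  have hspec : G.adjMatrix ℝ = V * Matrix.diagonal μ * star V := by
    have h := hA.spectral_theorem
    simpa [hV, hμ] using h
  have conj_mul : ∀ D E : Fin n → ℝ,
      (V * Matrix.diagonal D * star V) * (V * Matrix.diagonal E * star V)
        = V * Matrix.diagonal (fun j => D j * E j) * star V := by
    intro D E
    rw [Matrix.mul_assoc (V * Matrix.diagonal D) (star V) (V * Matrix.diagonal E * star V),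
      ← Matrix.mul_assoc (star V) (V * Matrix.diagonal E) (star V),
      ← Matrix.mul_assoc (star V) V (Matrix.diagonal E), hUV, Matrix.one_mul,
      ← Matrix.mul_assoc (V * Matrix.diagonal D) (Matrix.diagonal E) (star V),
      Matrix.mul_assoc V (Matrix.diagonal D) (Matrix.diagonal E),
      Matrix.diagonal_mul_diagonal]
  have hdiag : ∀ l, TFAux.MM G l = V * Matrix.diagonal (u l) * star V := by
    intro l
    induction l using Nat.twoStepInduction with
    | zero =>
        rw [TFAux.MM_zero, u0, Matrix.diagonal_one, Matrix.mul_one, hVU]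
    | one =>
        rw [TFAux.MM_one, u1]
        exact hspec
    | more l ih ih1 =>
        rw [TFAux.MMrec G hk1 hreg l, ih, ih1, hspec, conj_mul]
        have hsmul : ((k:ℝ) - 1) • (V * Matrix.diagonal (u l) * star V)
            = V * Matrix.diagonal (fun j => ((k:ℝ) - 1) * u l j) * star V := by
          rw [show (fun j => ((k:ℝ) - 1) * u l j) = ((k:ℝ) - 1) • u l from rfl,
            Matrix.diagonal_smul, Matrix.mul_smul, Matrix.smul_mul]
        rw [hsmul, ← Matrix.sub_mul, ← Matrix.mul_sub]
        have hd : ((Matrix.diagonal fun j => μ j * u (l + 1) j)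
            - Matrix.diagonal fun j => ((k:ℝ) - 1) * u l j) = Matrix.diagonal (u (l + 2)) := by
          have hfun : (fun i => μ i * u (l + 1) i - ((k:ℝ) - 1) * u l i) = u (l + 2) :=
            funext fun i => (urec l i).symm
          rw [Matrix.diagonal_sub, hfun]
        rw [hd]
  have htrace : (TFAux.MM G m).trace = ∑ j, u m j := by
    rw [hdiag m, Matrix.trace_mul_cycle, hUV, Matrix.one_mul, Matrix.trace_diagonal]
  have hnn : 0 ≤ (TFAux.MM G m).trace := by
    rw [Matrix.trace]
    exact Finset.sum_nonneg fun i _ => TFAux.MM_nonneg G m i i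
  rw [htrace] at hnn
  calc (0:ℝ) ≤ ∑ j, u m j := hnn
    _ = q ^ m * ∑ j : Fin n, (Polynomial.Chebyshev.U ℝ m).eval (μ j / (2 * q)) := by
        rw [Finset.mul_sum]
end
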